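/- Watson's identity: Li₂(α) − Li₂(α²) = π²/42 + (log α)², where α = (1/2)·sec(2π/7). -/

import Mathlib

open Real Set Filter Topology

/-- The polylogarithm `Li_s(x) = ∑_{n ≥ 1} x^n / n^s` as a real series. -/
noncomputable def Li (s : ℕ) (x : ℝ) : ℝ := ∑' n : ℕ, x ^ (n + 1) / (n + 1 : ℝ) ^ s

lemma li2_summable {x : ℝ} (h : |x| ≤ 1) :
    Summable (fun n : ℕ => x ^ (n + 1) / ((n : ℝ) + 1) ^ 2) := by
  have hs : Summable (fun n : ℕ => 1 / ((n : ℝ) + 1) ^ 2) := by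
    have := Real.summable_one_div_nat_pow.mpr (le_refl 2)
    simpa using (summable_nat_add_iff 1).mpr this
  refine hs.of_norm_bounded (fun n => ?_)
  have hn : (0:ℝ) < ((n:ℝ)+1) := by positivity
  rw [norm_div, norm_pow, norm_pow, Real.norm_eq_abs ((n:ℝ)+1), abs_of_pos hn]
  gcongr
  exact pow_le_one₀ (norm_nonneg x) (by simpa using h)

lemma li2_hasSum {x : ℝ} (h : |x| ≤ 1) :
    HasSum (fun n : ℕ => x ^ (n + 1) / ((n : ℝ) + 1) ^ 2) (Li 2 x) := by
  have := (li2_summable h).hasSum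
  simpa [Li] using this

lemma li2_zero : Li 2 0 = 0 := by simp [Li]

lemma li2_one : Li 2 1 = π ^ 2 / 6 := by
  have h := hasSum_zeta_two
  have h2 := (hasSum_nat_add_iff' (f := fun n : ℕ => (1 : ℝ) / (n : ℝ) ^ 2) 1).mpr h
  simp only [Finset.range_one, Finset.sum_singleton, Nat.cast_zero] at h2
  norm_num at h2
  have h3 := li2_hasSum (x := 1) (by norm_num)
  simp only [one_pow] at h3
  refine h3.unique ?_
  convert h2 using 2 with n
  · rfl
  ring

lemma li2_dup {x : ℝ} (h : |x| ≤ 1) :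
    Li 2 x + Li 2 (-x) = Li 2 (x ^ 2) / 2 := by
  have hx2 : |x ^ 2| ≤ 1 := by rw [abs_pow]; exact pow_le_one₀ (abs_nonneg x) h
  have h1 := li2_hasSum h
  have h2 := li2_hasSum (x := -x) (by simpa using h)
  have hsum := h1.add h2
  -- combined series
  set g : ℕ → ℝ := fun n => x ^ (n + 1) / ((n : ℝ) + 1) ^ 2 + (-x) ^ (n + 1) / ((n : ℝ) + 1) ^ 2
  have h3 := (li2_hasSum hx2).div_const 2
  -- h3 : HasSum (fun m => (x^2)^(m+1)/((m:ℝ)+1)^2 / 2) (Li 2 (x^2) / 2)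
  have hinj : Function.Injective (fun m : ℕ => 2 * m + 1) := by
    intro a b hab; simp only [] at hab; omega
  have hcomp : (g ∘ fun m : ℕ => 2 * m + 1) = fun m : ℕ => (x ^ 2) ^ (m + 1) / ((m : ℝ) + 1) ^ 2 / 2 := by
    funext m
    simp only [Function.comp_apply, g]
    have h4 : (-x) ^ (2 * m + 1 + 1) = x ^ (2 * m + 1 + 1) := by
      rw [show 2 * m + 1 + 1 = 2 * (m + 1) by ring]
      rw [pow_mul, pow_mul]
      congr 1
      ring
    rw [h4]
    have h5 : x ^ (2 * m + 1 + 1) = (x ^ 2) ^ (m + 1) := by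
      rw [← pow_mul, show 2*(m+1) = 2*m+1+1 from by ring]
    rw [h5]
    push_cast
    field_simp
    ring
  have hzero : ∀ n ∉ Set.range (fun m : ℕ => 2 * m + 1), g n = 0 := by
    intro n hn
    have hodd : Even (n + 1) → False := by
      intro he
      obtain ⟨k, hk⟩ := he
      apply hn
      exact ⟨k - 1, by simp only []; omega⟩
    have : Odd (n + 1) := by
      rcases Nat.even_or_odd (n + 1) with he | ho
      · exact absurd he hodd
      · exact ho
    simp only [g, Odd.neg_pow this]
    ring
  have h6 : HasSum (g ∘ fun m : ℕ => 2 * m + 1) (Li 2 (x ^ 2) / 2) := by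
    rw [hcomp]; exact h3
  exact hsum.unique ((Function.Injective.hasSum_iff hinj hzero).mp h6)

lemma li2_continuousOn : ContinuousOn (Li 2) (Icc (-1 : ℝ) 1) := by
  have : ContinuousOn (fun x : ℝ => ∑' n : ℕ, x ^ (n + 1) / ((n : ℝ) + 1) ^ 2) (Icc (-1 : ℝ) 1) := by
    apply continuousOn_tsum (u := fun n : ℕ => 1 / ((n : ℝ) + 1) ^ 2)
    · intro i; exact (continuous_pow (i+1)).continuousOn.div_const _
    · have := Real.summable_one_div_nat_pow.mpr (le_refl 2)
      simpa using (summable_nat_add_iff 1).mpr this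
    · intro n x hx
      have hx1 : |x| ≤ 1 := abs_le.mpr ⟨hx.1, hx.2⟩
      have hn : (0:ℝ) < ((n:ℝ)+1) := by positivity
      rw [norm_div, norm_pow, norm_pow, Real.norm_eq_abs ((n:ℝ)+1), abs_of_pos hn]
      gcongr
      exact pow_le_one₀ (norm_nonneg x) (by simpa using hx1)
  exact this

lemma li2_hasDerivAt {x : ℝ} (h1 : |x| < 1) (hx : x ≠ 0) :
    HasDerivAt (Li 2) (-Real.log (1 - x) / x) x := by
  set r : ℝ := (1 + |x|) / 2 with hr
  have hr0 : 0 ≤ r := by positivity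
  have hxr : |x| < r := by rw [hr]; linarith
  have hr1 : r < 1 := by rw [hr]; linarith
  have key : HasDerivAt (Li 2) (∑' n : ℕ, x ^ n / ((n : ℝ) + 1)) x := by
    have := hasDerivAt_tsum_of_isPreconnected
      (u := fun n : ℕ => r ^ n)
      (g := fun n y => y ^ (n + 1) / ((n : ℝ) + 1) ^ 2)
      (g' := fun n y => y ^ n / ((n : ℝ) + 1))
      (summable_geometric_of_lt_one hr0 hr1)
      (isOpen_Ioo (a := -r) (b := r))
      (isPreconnected_Ioo)
      (fun n y _ => by
        have hd := (hasDerivAt_pow (n + 1) y).div_const (((n : ℝ) + 1) ^ 2)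
        convert hd using 1
        · rfl
        have hn : ((n:ℝ)+1) ≠ 0 := by positivity
        push_cast
        field_simp)
      (fun n y hy => by
        have hyr : |y| ≤ r := le_of_lt (abs_lt.mpr ⟨hy.1, hy.2⟩)
        have hn : (1:ℝ) ≤ ((n:ℝ)+1) := by simp
        rw [norm_div, norm_pow, Real.norm_eq_abs y, Real.norm_eq_abs ((n:ℝ)+1),
          abs_of_pos (by positivity : (0:ℝ) < (n:ℝ)+1)]
        calc |y| ^ n / ((n:ℝ)+1) ≤ |y| ^ n / 1 := by gcongr
          _ = |y| ^ n := div_one _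
          _ ≤ r ^ n := by gcongr)
      (y₀ := x) (y := x)
      (mem_Ioo.mpr ⟨by linarith [neg_abs_le x], by linarith [le_abs_self x]⟩)
      (li2_summable (le_of_lt h1))
      (mem_Ioo.mpr ⟨by linarith [neg_abs_le x], by linarith [le_abs_self x]⟩)
    have heq : (fun z : ℝ => ∑' n : ℕ, z ^ (n + 1) / ((n : ℝ) + 1) ^ 2) = Li 2 := by
      funext z; simp [Li]
    rwa [heq] at this
  have hsum : HasSum (fun n : ℕ => x ^ n / ((n : ℝ) + 1)) (-Real.log (1 - x) / x) := by
    have h2 := hasSum_pow_div_log_of_abs_lt_one h1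
    have h3 := h2.div_const x
    convert h3 using 2 with n
    · rfl
    rw [pow_succ]
    field_simp
  rwa [hsum.tsum_eq] at key

lemma endpoint_eq {f : ℝ → ℝ} {a b : ℝ} (hab : a < b)
    (hc : ContinuousOn f (Icc a b)) (hd : ∀ x ∈ Ioo a b, HasDerivAt f 0 x) :
    f b = f a := by
  obtain ⟨c, hc1, hc2⟩ := exists_hasDerivAt_eq_slope f (fun _ => 0) hab hc hd
  have hba : b - a ≠ 0 := by linarith
  field_simp at hc2
  linarith [hc2]

lemma li2_landen {x : ℝ} (hx : 0 < x) (hx2 : x < 1 / 2) :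
    Li 2 x + Li 2 (-x / (1 - x)) = -(Real.log (1 - x)) ^ 2 / 2 := by
  set h : ℝ → ℝ := fun t => Li 2 t + Li 2 (-t / (1 - t)) + (Real.log (1 - t)) ^ 2 / 2 with hh
  have key : h x = h 0 := by
    apply endpoint_eq hx
    · -- continuity on [0, x]
      have hsub : Icc (0:ℝ) x ⊆ Icc (-1:ℝ) 1 := by
        intro t ht; exact ⟨by linarith [ht.1], by linarith [ht.2]⟩
      have hden : ∀ t ∈ Icc (0:ℝ) x, (1:ℝ) - t ≠ 0 := by
        intro t ht; have := ht.2; intro hcon; linarith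
      refine ContinuousOn.add (ContinuousOn.add ?_ ?_) ?_
      · exact li2_continuousOn.mono hsub
      · apply li2_continuousOn.comp
        · exact (continuousOn_id.neg.div (continuousOn_const.sub continuousOn_id) hden)
        · intro t ht
          simp only [id] at *
          obtain ⟨ht0, htx⟩ := ht
          have h1t : (0:ℝ) < 1 - t := by linarith
          have hup : -t / (1 - t) ≤ 0 :=
            div_nonpos_of_nonpos_of_nonneg (by linarith) (by linarith)
          have hlo : (-1 : ℝ) ≤ -t / (1 - t) := by
            rw [neg_div, neg_le_neg_iff, div_le_one h1t]; linarith
          exact ⟨hlo, by linarith⟩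
      · apply ContinuousOn.div_const
        apply ContinuousOn.pow
        apply ContinuousOn.log
        · exact continuousOn_const.sub continuousOn_id
        · exact hden
    · -- derivative zero on (0, x)
      intro t ht
      obtain ⟨ht0, htx⟩ := ht
      have h1t : (0:ℝ) < 1 - t := by linarith
      have htlt : t < 1/2 := by linarith
      have habs : |t| < 1 := abs_lt.mpr ⟨by linarith, by linarith⟩
      set w : ℝ := -t / (1 - t) with hw
      have hw0 : w < 0 := div_neg_of_neg_of_pos (by linarith) h1t
      have hwgt : -1 < w := by
        rw [hw, neg_div, neg_lt, neg_neg, div_lt_one h1t]; linarith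
      have hwabs : |w| < 1 := abs_lt.mpr ⟨hwgt, by linarith⟩
      have hwne : w ≠ 0 := ne_of_lt hw0
      have h1w : 1 - w = 1 / (1 - t) := by rw [hw]; field_simp; ring
      -- derivative of Li 2 at t
      have d1 : HasDerivAt (Li 2) (-Real.log (1 - t) / t) t :=
        li2_hasDerivAt habs (ne_of_gt ht0)
      -- derivative of t ↦ -t/(1-t)
      have d2 : HasDerivAt (fun s : ℝ => -s / (1 - s)) (-1 / (1 - t) ^ 2) t := by
        have := (hasDerivAt_id t).neg.div ((hasDerivAt_id t).const_sub 1) (ne_of_gt h1t)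
        refine this.congr_deriv ?_
        simp only [id, Pi.neg_apply]
        field_simp
        ring
      -- derivative of Li 2 ∘ w
      have d3 : HasDerivAt (fun s : ℝ => Li 2 (-s / (1 - s)))
          ((-Real.log (1 - w) / w) * (-1 / (1 - t) ^ 2)) t :=
        by have := (li2_hasDerivAt hwabs hwne).comp t d2; exact this
      -- derivative of log(1-t)^2/2
      have d4 : HasDerivAt (fun s : ℝ => (Real.log (1 - s)) ^ 2 / 2)
          ((2 * Real.log (1 - t) * (-1 / (1 - t))) / 2) t := by
        have dlog : HasDerivAt (fun s : ℝ => Real.log (1 - s)) (-1 / (1 - t)) t := by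
          have := (Real.hasDerivAt_log (ne_of_gt h1t)).comp t ((hasDerivAt_id t).const_sub 1)
          refine this.congr_deriv ?_
          field_simp
        exact ((dlog.pow 2).div_const 2).congr_deriv (by push_cast; ring)
      have dsum := (d1.add d3).add d4
      refine dsum.congr_deriv ?_
      rw [h1w, Real.log_div one_ne_zero (ne_of_gt h1t), Real.log_one, hw]
      field_simp
      ring
  have h0 : h 0 = 0 := by
    simp only [hh]
    norm_num [li2_zero]
  rw [h0] at key
  simp only [hh] at key
  linarith [key]

lemma loglog_tendsto :
    Tendsto (fun t : ℝ => Real.log t * Real.log (1 - t)) (𝓝[<] 1) (𝓝 0) := by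
  have T1 : Tendsto (fun t : ℝ => Real.log t / (t - 1)) (𝓝[≠] (1:ℝ)) (𝓝 1) := by
    have h := hasDerivAt_iff_tendsto_slope.mp (Real.hasDerivAt_log one_ne_zero)
    norm_num at h
    refine h.congr fun t => ?_
    rw [slope_def_field, Real.log_one, sub_zero]
  have T2 : Tendsto (fun t : ℝ => (t - 1) * Real.log (1 - t)) (𝓝[<] (1:ℝ)) (𝓝 0) := by
    have hu : Tendsto (fun t : ℝ => 1 - t) (𝓝[<] (1:ℝ)) (𝓝[>] (0:ℝ)) := by
      apply tendsto_nhdsWithin_of_tendsto_nhds_of_eventually_within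
      · have h0 : Tendsto (fun t : ℝ => 1 - t) (𝓝 (1:ℝ)) (𝓝 0) := by
          have h1 := Continuous.tendsto (show Continuous fun t : ℝ => 1 - t by continuity) 1
          simpa using h1
        exact h0.mono_left nhdsWithin_le_nhds
      · filter_upwards [eventually_mem_nhdsWithin] with t ht
        simp only [mem_Iio] at ht
        simp only [mem_Ioi]
        linarith
    have hlog : Tendsto (fun x : ℝ => Real.log x * x) (𝓝[>] (0:ℝ)) (𝓝 0) := by
      have := tendsto_log_mul_rpow_nhdsGT_zero zero_lt_one
      refine this.congr fun x => ?_
      rw [Real.rpow_one]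
    have := hlog.comp hu
    have h2 : Tendsto (fun t : ℝ => Real.log (1 - t) * (1 - t)) (𝓝[<] (1:ℝ)) (𝓝 0) := this
    have := h2.neg
    simp only [neg_zero] at this
    refine this.congr fun t => ?_
    ring
  have hmono : (𝓝[<] (1:ℝ)) ≤ (𝓝[≠] (1:ℝ)) :=
    nhdsWithin_mono 1 fun t ht => ne_of_lt ht
  have T3 := (T1.mono_left hmono).mul T2
  norm_num at T3
  refine T3.congr' ?_
  filter_upwards [eventually_mem_nhdsWithin] with t ht
  have ht1 : t - 1 ≠ 0 := by simp only [mem_Iio] at ht; intro hc; linarith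
  field_simp

lemma li2_reflection {x : ℝ} (hx : 0 < x) (hx1 : x < 1) :
    Li 2 x + Li 2 (1 - x) = Real.pi ^ 2 / 6 - Real.log x * Real.log (1 - x) := by
  set h : ℝ → ℝ := fun t => Li 2 t + Li 2 (1 - t) + Real.log t * Real.log (1 - t) with hh
  have key : h 1 = h x := by
    apply endpoint_eq hx1
    · -- continuity on [x, 1]
      have hsub : Icc x 1 ⊆ Icc (-1:ℝ) 1 := fun t ht => ⟨by linarith [ht.1], ht.2⟩
      refine ContinuousOn.add (ContinuousOn.add ?_ ?_) ?_
      · exact li2_continuousOn.mono hsub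
      · apply li2_continuousOn.comp
        · exact continuousOn_const.sub continuousOn_id
        · intro t ht
          exact ⟨by linarith [ht.2], by linarith [ht.1]⟩
      · -- continuity of log t * log (1-t) on [x,1]
        intro t ht
        rcases eq_or_lt_of_le ht.2 with h1 | h1
        · -- t = 1 : use the limit lemma
          subst h1
          rw [← continuousWithinAt_diff_self]
          rw [ContinuousWithinAt]
          have hval : Real.log 1 * Real.log (1 - 1) = 0 := by norm_num
          rw [hval]
          have hle2 : 𝓝[Icc x 1 \ {1}] (1:ℝ) ≤ 𝓝[<] (1:ℝ) := by
            apply nhdsWithin_mono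
            rintro s ⟨hs1, hs2⟩
            simp only [mem_singleton_iff] at hs2
            exact lt_of_le_of_ne hs1.2 hs2
          exact loglog_tendsto.mono_left hle2
        · -- t < 1 : genuinely continuous
          apply ContinuousWithinAt.mul
          · exact (Real.continuousAt_log (by linarith [ht.1] : t ≠ 0)).continuousWithinAt
          · have hcc : ContinuousAt (fun s : ℝ => Real.log (1 - s)) t :=
              ContinuousAt.comp (x := t) (g := Real.log)
                (Real.continuousAt_log (by intro hc; linarith : (1 - t) ≠ 0))
                (continuousAt_const.sub continuousAt_id)
            exact hcc.continuousWithinAt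
    · -- derivative zero on (x, 1)
      intro t ht
      obtain ⟨htx, ht1⟩ := ht
      have ht0 : 0 < t := lt_trans hx htx
      have h1t : (0:ℝ) < 1 - t := by linarith
      have habs : |t| < 1 := abs_lt.mpr ⟨by linarith, ht1⟩
      have habs' : |1 - t| < 1 := abs_lt.mpr ⟨by linarith, by linarith⟩
      have d1 : HasDerivAt (Li 2) (-Real.log (1 - t) / t) t :=
        li2_hasDerivAt habs (ne_of_gt ht0)
      have d2 : HasDerivAt (fun s : ℝ => Li 2 (1 - s))
          ((-Real.log (1 - (1 - t)) / (1 - t)) * (-1)) t := by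
        have dinner : HasDerivAt (fun s : ℝ => 1 - s) (-1 : ℝ) t := by
          simpa using ((hasDerivAt_id t).const_sub 1)
        exact (li2_hasDerivAt habs' (ne_of_gt h1t)).comp t dinner
      have d3 : HasDerivAt (fun s : ℝ => Real.log s * Real.log (1 - s))
          ((1 / t) * Real.log (1 - t) + Real.log t * (-1 / (1 - t))) t := by
        have dl1 : HasDerivAt Real.log (1 / t) t := by
          simpa [one_div] using Real.hasDerivAt_log (ne_of_gt ht0)
        have dl2 : HasDerivAt (fun s : ℝ => Real.log (1 - s)) (-1 / (1 - t)) t := by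
          have := (Real.hasDerivAt_log (ne_of_gt h1t)).comp t
            ((hasDerivAt_id t).const_sub 1)
          refine this.congr_deriv ?_
          field_simp
        exact dl1.mul dl2
      have dsum := (d1.add d2).add d3
      refine dsum.congr_deriv ?_
      have : 1 - (1 - t) = t := by ring
      rw [this]
      field_simp
      ring
  have h1v : h 1 = Real.pi ^ 2 / 6 := by
    simp only [hh]
    rw [sub_self, li2_zero, li2_one, Real.log_one]
    simp
  rw [h1v] at key
  simp only [hh] at key
  linarith [key]

lemma cos7_cubic : 8 * Real.cos (2 * Real.pi / 7) ^ 3 + 4 * Real.cos (2 * Real.pi / 7) ^ 2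
    - 4 * Real.cos (2 * Real.pi / 7) - 1 = 0 := by
  set θ : ℝ := 2 * Real.pi / 7 with hθ
  set c : ℝ := Real.cos θ with hc
  have h7 : 2 * Real.pi - 3 * θ = 4 * θ := by rw [hθ]; ring
  have h1 : Real.cos (4 * θ) = Real.cos (3 * θ) := by
    rw [← h7, Real.cos_two_pi_sub]
  have h3 : Real.cos (3 * θ) = 4 * c ^ 3 - 3 * c := Real.cos_three_mul θ
  have h4 : Real.cos (4 * θ) = 2 * (2 * c ^ 2 - 1) ^ 2 - 1 := by
    have h2 : Real.cos (2 * θ) = 2 * c ^ 2 - 1 := Real.cos_two_mul θ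
    have : (4 : ℝ) * θ = 2 * (2 * θ) := by ring
    rw [this, Real.cos_two_mul, h2]
  have hquartic : (c - 1) * (8 * c ^ 3 + 4 * c ^ 2 - 4 * c - 1) = 0 := by
    have := h1
    rw [h3, h4] at this
    nlinarith [this]
  have hc1 : c < 1 := by
    have h0 : Real.cos θ < Real.cos 0 := by
      apply Real.cos_lt_cos_of_nonneg_of_le_pi le_rfl
      · rw [hθ]; linarith [Real.pi_pos]
      · rw [hθ]; positivity
    rwa [Real.cos_zero] at h0
  rcases mul_eq_zero.mp hquartic with h | h
  · exfalso; linarith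
  · exact h

lemma cos7_gt : 1 / 2 < Real.cos (2 * Real.pi / 7) := by
  have h := Real.cos_lt_cos_of_nonneg_of_le_pi
    (show (0:ℝ) ≤ 2 * Real.pi / 7 by positivity)
    (show Real.pi / 3 ≤ Real.pi by linarith [Real.pi_pos])
    (show 2 * Real.pi / 7 < Real.pi / 3 by linarith [Real.pi_pos])
  rwa [Real.cos_pi_div_three] at h

lemma cos7_sq_lt : Real.cos (2 * Real.pi / 7) ^ 2 < 1 / 2 := by
  set c : ℝ := Real.cos (2 * Real.pi / 7)
  have h1 := cos7_cubic
  have h2 := cos7_gt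
  nlinarith [sq_nonneg (c - 5/8), sq_nonneg (c - 1/2), sq_nonneg c]

set_option maxHeartbeats 2000000 in
theorem stmt_4 :
    Li 2 (1 / (2 * Real.cos (2 * Real.pi / 7)))
      - Li 2 ((1 / (2 * Real.cos (2 * Real.pi / 7))) ^ 2)
      = Real.pi ^ 2 / 42 + (Real.log (1 / (2 * Real.cos (2 * Real.pi / 7)))) ^ 2 := by
  have hc3 := cos7_cubic
  have hcgt := cos7_gt
  have hcsq := cos7_sq_lt
  set c : ℝ := Real.cos (2 * Real.pi / 7) with hcdef
  set a : ℝ := 1 / (2 * c) with hadef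
  have hc0 : 0 < c := by linarith
  have hc1 : c < 1 := by nlinarith
  have ha0 : 0 < a := by rw [hadef]; positivity
  have ha1 : a < 1 := by
    rw [hadef, div_lt_one (by linarith : (0:ℝ) < 2 * c)]; linarith
  have ha3 : a ^ 3 + 2 * a ^ 2 - a - 1 = 0 := by
    rw [hadef]
    have h2c : (2 * c) ≠ 0 := by positivity
    field_simp
    linear_combination (-1) * hc3
  have ha2 : 1 / 2 < a ^ 2 := by
    rw [hadef, div_pow, one_pow, lt_div_iff₀ (by positivity : (0:ℝ) < (2*c)^2)]
    nlinarith
  clear_value a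
  -- auxiliary quantities
  set b : ℝ := a / (1 + a) with hbdef
  set k : ℝ := 1 / (1 + a) with hkdef
  clear_value b k
  have h1pa : (0:ℝ) < 1 + a := by linarith
  have hb0 : 0 < b := by rw [hbdef]; positivity
  have hb12 : b < 1 / 2 := by
    rw [hbdef, div_lt_iff₀ h1pa]; linarith
  have hk0 : 0 < k := by rw [hkdef]; positivity
  have hk1 : k < 1 := by
    rw [hkdef, div_lt_one h1pa]; linarith
  have hba : 1 - a = b ^ 2 := by
    rw [hbdef, div_pow]
    rw [eq_div_iff (by positivity : ((1+a)^2) ≠ 0)]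
    linear_combination -ha3
  have h1a2 : 1 - a ^ 2 = a * b := by
    rw [hbdef]
    rw [mul_div_assoc', eq_div_iff (ne_of_gt h1pa)]
    linear_combination -ha3
  have hka : k = b / a := by
    rw [hkdef, hbdef]
    field_simp
  have hkb : 1 - k = b := by
    rw [hkdef, hbdef]
    field_simp
    ring
  have hbk : 1 - b = k := by
    rw [hkdef, hbdef]
    field_simp
    ring
  have harg12a : 1 - k ^ 2 = b / a ^ 2 := by
    rw [hkdef, hbdef]
    field_simp
    ring_nf
    linear_combination ha3
  have hksq : k ^ 2 < 1 / 2 := by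
    rw [hkdef, div_pow, one_pow, div_lt_iff₀ (by positivity : (0:ℝ) < (1+a)^2)]
    nlinarith
  have h1a2pos : 0 < 1 - a ^ 2 := by nlinarith
  have h1a2lt : 1 - a ^ 2 < 1 / 2 := by linarith
  -- logs
  have hlogk : Real.log k = Real.log b - Real.log a := by
    rw [hka, Real.log_div (ne_of_gt hb0) (ne_of_gt ha0)]
  have hlog1a : Real.log (1 - a) = 2 * Real.log b := by
    rw [hba, Real.log_pow]; norm_num
  have hlog1a2 : Real.log (1 - a ^ 2) = Real.log a + Real.log b := by
    rw [h1a2, Real.log_mul (ne_of_gt ha0) (ne_of_gt hb0)]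
  have hloga2 : Real.log (a ^ 2) = 2 * Real.log a := by
    rw [Real.log_pow]; norm_num
  have hlogba2 : Real.log (b / a ^ 2) = Real.log b - 2 * Real.log a := by
    rw [Real.log_div (ne_of_gt hb0) (by positivity : (a:ℝ)^2 ≠ 0), Real.log_pow]; norm_num
  -- the nine equations
  have e1 := li2_dup (x := a) (by rw [abs_of_pos ha0]; linarith)
  have e2 := li2_dup (x := b) (by rw [abs_of_pos hb0]; linarith)
  have e3 := li2_dup (x := k) (by rw [abs_of_pos hk0]; linarith)
  have e4 := li2_reflection ha0 ha1
  rw [hlog1a, hba] at e4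
  have e5 := li2_reflection (x := a ^ 2) (by positivity) (by nlinarith)
  rw [hloga2, hlog1a2] at e5
  have e6 := li2_reflection hk0 hk1
  rw [hkb, hlogk] at e6
  have e8 := li2_landen (x := 1 - a ^ 2) h1a2pos h1a2lt
  rw [show (1:ℝ) - (1 - a ^ 2) = a ^ 2 by ring] at e8
  rw [show -(1 - a ^ 2) / a ^ 2 = -k by
      rw [h1a2, hka]; field_simp] at e8
  rw [hloga2] at e8
  have e10 := li2_landen hb0 hb12
  rw [hbk] at e10
  rw [show -b / k = -a by rw [hka]; field_simp] at e10
  rw [hlogk] at e10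
  have e12 := li2_landen (x := k ^ 2) (by positivity) hksq
  rw [harg12a] at e12
  rw [show -k ^ 2 / (b / a ^ 2) = -b by
      rw [hka]; field_simp] at e12
  rw [hlogba2] at e12
  -- final linear combination
  linear_combination (6/7) * e1 + (2/7) * e2 - (4/7) * e3 + (1/7) * e4 - (4/7) * e5
    + (4/7) * e6 + (4/7) * e8 - (6/7) * e10 - (2/7) * e12
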